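/- Let M be an (X,U)-covariant rank-1 POVM for a finite group G acting on finite X, with seed operators K_O = |d_O⟩⟨d_O| on each orbit O (d_O a common eigenvector of U(h), h ∈ H_O, or zero). Define the enlarged value space X' := (set of orbits) × G with G-action g·(O,g') := (O,gg'), and M'_{O,g} := (#H_O)^{-1} U(g)|d_O⟩⟨d_O|U(g)*. Then M' is a covariant POVM on X' (M'_{g(O,g')} = U(g)M'_{O,g'}U(g)*), M' is normalized whenever M is, and M is a post-processing of M': M_x = ∑_{h∈H_O} M'_{O,g_x h} for x ∈ O. -/

import Mathlib

open ContinuousLinearMap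
noncomputable section

/-- The rank-one projection-like operator `|v⟩⟨v|`. -/
def projOp {H : Type*} [NormedAddCommGroup H] [InnerProductSpace ℂ H] (v : H) :
    H →L[ℂ] H :=
  (innerSL ℂ v).smulRight v

section aux
variable {H : Type*} [NormedAddCommGroup H] [InnerProductSpace ℂ H] [FiniteDimensional ℂ H]

lemma projOp_apply (v w : H) : projOp v w = (inner ℂ v w : ℂ) • v := rfl

lemma projOp_adjoint (v : H) : adjoint (projOp v) = projOp v := by
  symm
  rw [eq_adjoint_iff]
  intro x y
  simp [projOp_apply, inner_smul_left, inner_smul_right]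
  ring

lemma projOp_isPositive (v : H) : (projOp v).IsPositive := by
  refine isPositive_def'.mpr ⟨isSelfAdjoint_iff'.mpr (projOp_adjoint v), fun x => ?_⟩
  have h1 : (inner ℂ (projOp v x) x : ℂ) = (starRingEnd ℂ) (inner ℂ v x) * inner ℂ v x := by
    simp [projOp_apply, inner_smul_left]
    ring
  rw [reApplyInnerSelf_apply, h1, ← Complex.normSq_eq_conj_mul_self]
  simpa using Complex.normSq_nonneg _

end aux

section aux2
variable {H : Type*} [NormedAddCommGroup H] [InnerProductSpace ℂ H] [FiniteDimensional ℂ H]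

lemma adjoint_smul'' (c : ℂ) (A : H →L[ℂ] H) :
    adjoint (c • A) = (starRingEnd ℂ) c • adjoint A := by
  rw [← star_eq_adjoint, star_smul, star_eq_adjoint]; rfl

lemma phase_conj {c : ℂ} (hc : ‖c‖ = 1) (A B : H →L[ℂ] H) :
    (c • A) ∘L B ∘L adjoint (c • A) = A ∘L B ∘L adjoint A := by
  have hcc : c * (starRingEnd ℂ) c = 1 := by
    rw [Complex.mul_conj]; norm_cast
    simp [Complex.normSq_eq_norm_sq, hc]
  rw [adjoint_smul'', smul_comp, comp_smul, comp_smul, smul_smul, hcc, one_smul]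

lemma smul_isPositive {c : ℝ} (hc : 0 ≤ c) {T : H →L[ℂ] H} (hT : T.IsPositive) :
    ((c : ℂ) • T).IsPositive := by
  refine isPositive_def'.mpr ⟨?_, fun x => ?_⟩
  · have h1 := isSelfAdjoint_iff'.mp hT.isSelfAdjoint
    rw [isSelfAdjoint_iff', adjoint_smul'', h1, Complex.conj_ofReal]
  · have h := (isPositive_def'.mp hT).2 x; rw [reApplyInnerSelf_apply] at h
    rw [reApplyInnerSelf_apply, smul_apply, inner_smul_left, Complex.conj_ofReal]
    simp only [RCLike.mul_re, Complex.mul_re, RCLike.ofReal_re, RCLike.ofReal_im,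
      Complex.ofReal_re, Complex.ofReal_im, zero_mul, sub_zero]
    simpa using mul_nonneg hc h

lemma eig_proj_conj {c : ℂ} (hc : ‖c‖ = 1) {A : H →L[ℂ] H} {v : H} (hv : A v = c • v) :
    A ∘L projOp v ∘L adjoint A = projOp v := by
  have hcc : c * (starRingEnd ℂ) c = 1 := by
    rw [Complex.mul_conj]; norm_cast
    simp [Complex.normSq_eq_norm_sq, hc]
  ext w
  rw [comp_apply, comp_apply, projOp_apply, projOp_apply, adjoint_inner_right, hv,
    inner_smul_left, map_smul, hv, smul_smul]
  congr 1
  rw [mul_comm, ← mul_assoc, hcc, one_mul]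

end aux2

set_option maxHeartbeats 1000000 in
/-- A covariant rank-1 POVM `M` with seeds `|d_O⟩⟨d_O|` gives rise to the
covariant POVM `M'_{O,g} := (#H_O)⁻¹ U(g)|d_O⟩⟨d_O|U(g)*` on the enlarged value space
`Orb × G`; `M'` is covariant, normalized whenever `M` is, and `M` is a post-processing
of `M'`: `M x = ∑_{h ∈ H_O} M'_{O, gₓ h}`. -/
theorem rank_one_covariant_povm_refinement
    {G X H : Type*} [Group G] [Fintype G] [Fintype X] [DecidableEq X] [MulAction G X]
    [NormedAddCommGroup H] [InnerProductSpace ℂ H] [FiniteDimensional ℂ H]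
    (U : G → (H →L[ℂ] H)) (m : G → G → ℂ)
    (hUnit : ∀ g, adjoint (U g) ∘L U g = 1 ∧ U g ∘L adjoint (U g) = 1)
    (hm : ∀ g h, ‖m g h‖ = 1)
    (hproj : ∀ g h, U (g * h) = m g h • (U g ∘L U h))
    -- orbit data
    (b : X → X) (gx : X → G)
    (hb : ∀ (g : G) (x : X), b (g • x) = b x)
    (hbb : ∀ x, b (b x) = b x)
    (hgx : ∀ x, gx x • b x = x)
    -- the seed vectors, constant on orbits, common eigenvectors of the stabilizer
    (d : X → H) (hd : ∀ (g : G) (x : X), d (g • x) = d x)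
    (heig : ∀ (x : X) (h : G), h • b x = b x →
      ∃ c : ℂ, ‖c‖ = 1 ∧ U h (d x) = c • d x)
    -- the rank-1 covariant POVM `M`
    (M : X → (H →L[ℂ] H))
    (hM : ∀ x, M x = U (gx x) ∘L projOp (d x) ∘L adjoint (U (gx x)))
    -- the refined POVM `M'` on `Orb × G`
    (M' : X → G → (H →L[ℂ] H))
    (hM' : ∀ x g, M' x g =
      (((Finset.univ.filter fun h : G => h • b x = b x).card : ℂ))⁻¹ •
        (U g ∘L projOp (d x) ∘L adjoint (U g))) :
    (∀ (x : X) (g : G), (M' x g).IsPositive) ∧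
    -- covariance of `M'` for the action `g • (O, g') = (O, g g')`
    (∀ (g g' : G) (x : X), M' x (g * g') = U g ∘L M' x g' ∘L adjoint (U g)) ∧
    -- normalization of `M'` whenever `M` is normalized
    ((∑ x, M x = 1) → ∑ r ∈ Finset.univ.image b, ∑ g : G, M' r g = 1) ∧
    -- `M` is a post-processing of `M'`
    (∀ x : X, M x =
      ∑ h ∈ Finset.univ.filter (fun h : G => h • b x = b x), M' x (gx x * h)) := by
  -- key conjugation fact
  have keyC : ∀ (x : X) (g : G),
      U g ∘L projOp (d x) ∘L adjoint (U g) =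
      U (gx (g • b x)) ∘L projOp (d x) ∘L adjoint (U (gx (g • b x))) := by
    intro x g
    set y := g • b x with hy
    have hby : b y = b x := by rw [hy, hb, hbb]
    have hk : gx y • b x = y := by rw [← hby]; exact hgx y
    have hh : ((gx y)⁻¹ * g) • b x = b x := by
      rw [mul_smul, ← hy, inv_smul_eq_iff, hk]
    have hg : g = gx y * ((gx y)⁻¹ * g) := by rw [mul_inv_cancel_left]
    obtain ⟨c, hc, hcv⟩ := heig x ((gx y)⁻¹ * g) hh
    calc U g ∘L projOp (d x) ∘L adjoint (U g)
        = U (gx y * ((gx y)⁻¹ * g)) ∘L projOp (d x) ∘L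
            adjoint (U (gx y * ((gx y)⁻¹ * g))) := by rw [← hg]
      _ = (U (gx y) ∘L U ((gx y)⁻¹ * g)) ∘L projOp (d x) ∘L
            adjoint (U (gx y) ∘L U ((gx y)⁻¹ * g)) := by
          rw [hproj]; exact phase_conj (hm _ _) _ _
      _ = U (gx y) ∘L (U ((gx y)⁻¹ * g) ∘L projOp (d x) ∘L
            adjoint (U ((gx y)⁻¹ * g))) ∘L adjoint (U (gx y)) := by
          rw [adjoint_comp]; rfl
      _ = U (gx y) ∘L projOp (d x) ∘L adjoint (U (gx y)) := by
          rw [eig_proj_conj hc hcv]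
  -- the stabilizer sets are nonempty
  have hcardpos : ∀ x : X,
      0 < (Finset.univ.filter fun h : G => h • b x = b x).card := by
    intro x
    refine Finset.card_pos.mpr ⟨1, ?_⟩
    simp
  refine ⟨?_, ?_, ?_, ?_⟩
  · -- positivity
    intro x g
    rw [hM' x g]
    have : (((Finset.univ.filter fun h : G => h • b x = b x).card : ℂ))⁻¹ =
        (((((Finset.univ.filter fun h : G => h • b x = b x).card : ℝ))⁻¹ : ℝ) : ℂ) := by
      push_cast; ring
    rw [this]
    exact smul_isPositive (inv_nonneg.mpr (Nat.cast_nonneg _)) ((projOp_isPositive (d x)).conj_adjoint (U g))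
  · -- covariance
    intro g g' x
    rw [hM' x (g * g'), hM' x g', hproj, phase_conj (hm g g'), adjoint_comp,
      smul_comp, comp_smul]
    congr 1
  · -- normalization
    intro hnorm
    have step2 : ∀ r ∈ Finset.univ.image b,
        ∑ g : G, M' r g = ∑ y ∈ Finset.univ.filter (fun y => b y = r), M y := by
      intro r hr
      obtain ⟨x0, _, hx0⟩ := Finset.mem_image.mp hr
      have hbr : b r = r := by rw [← hx0, hbb]
      have hM'g : ∀ g : G, M' r g =
          (((Finset.univ.filter fun h : G => h • r = r).card : ℂ))⁻¹ • M (g • r) := by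
        intro g
        rw [hM' r g, keyC r g, hM (g • r), hd g r]
        simp only [hbr]
      simp only [hM'g]
      rw [← Finset.smul_sum]
      have hmap : ∀ g ∈ (Finset.univ : Finset G),
          g • r ∈ Finset.univ.filter (fun y => b y = r) := by
        intro g _
        simp [hb, hbr]
      rw [← Finset.sum_fiberwise_of_maps_to hmap (fun g => M (g • r))]
      have hinner : ∀ y ∈ Finset.univ.filter (fun y => b y = r),
          (∑ g ∈ Finset.univ.filter (fun g : G => g • r = y), M (g • r)) =
            (Finset.univ.filter fun h : G => h • r = r).card • M y := by
        intro y hy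
        rw [Finset.mem_filter] at hy
        have hgy : gx y • r = y := by
          conv_lhs => rw [← hy.2]
          exact hgx y
        calc (∑ g ∈ Finset.univ.filter (fun g : G => g • r = y), M (g • r))
            = ∑ g ∈ Finset.univ.filter (fun g : G => g • r = y), M y := by
              refine Finset.sum_congr rfl fun g hg => ?_
              rw [Finset.mem_filter] at hg
              rw [hg.2]
          _ = (Finset.univ.filter (fun g : G => g • r = y)).card • M y :=
              Finset.sum_const _
          _ = (Finset.univ.filter fun h : G => h • r = r).card • M y := by
              congr 1
              apply Finset.card_bij' (fun g _ => (gx y)⁻¹ * g) (fun h _ => gx y * h)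
              · intro g hg
                rw [Finset.mem_filter] at hg ⊢
                refine ⟨Finset.mem_univ _, ?_⟩
                rw [mul_smul, hg.2, inv_smul_eq_iff, hgy]
              · intro h hh
                rw [Finset.mem_filter] at hh ⊢
                exact ⟨Finset.mem_univ _, by rw [mul_smul, hh.2, hgy]⟩
              · intro g _
                rw [mul_inv_cancel_left]
              · intro h _
                rw [inv_mul_cancel_left]
      rw [Finset.sum_congr rfl hinner]
      have hcard : ((Finset.univ.filter fun h : G => h • r = r).card : ℂ) ≠ 0 := by
        have : 0 < (Finset.univ.filter fun h : G => h • r = r).card :=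
          Finset.card_pos.mpr ⟨1, by simp⟩
        exact_mod_cast this.ne'
      rw [Finset.smul_sum]
      refine Finset.sum_congr rfl fun y _ => ?_
      rw [← Nat.cast_smul_eq_nsmul ℂ, smul_smul, inv_mul_cancel₀ hcard, one_smul]
    rw [Finset.sum_congr rfl step2,
      Finset.sum_fiberwise_of_maps_to (fun y _ => Finset.mem_image_of_mem b (Finset.mem_univ y)) M,
      hnorm]
  · -- post-processing
    intro x
    have hterm : ∀ h ∈ Finset.univ.filter (fun h : G => h • b x = b x),
        M' x (gx x * h) =
        (((Finset.univ.filter fun h : G => h • b x = b x).card : ℂ))⁻¹ • M x := by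
      intro h hh
      rw [Finset.mem_filter] at hh
      have h1 : (gx x * h) • b x = x := by rw [mul_smul, hh.2, hgx]
      rw [hM' x, keyC x (gx x * h), h1, hM x]
    rw [Finset.sum_congr rfl hterm, Finset.sum_const, ← Nat.cast_smul_eq_nsmul ℂ,
      smul_smul, mul_inv_cancel₀, one_smul]
    exact_mod_cast (hcardpos x).ne'
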